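/- Let ℓ > 0 and θ ∈ (0,π) be such that e^ℓ is a Salem number of degree 4 with complex conjugates e^{±iθ}. Then the minimal polynomial of β = e^{ℓ + iθ} over ℚ is r(x) = x⁴ - (4·cosh ℓ · cos θ)·x³ + (2 + 4·cosh²ℓ - 4·sin²θ)·x² - (4·cosh ℓ · cos θ)·x + 1; in particular β has degree 4 over ℚ. -/

import Mathlib

open Polynomial

private lemma expand4 (u v w z : ℂ) :
    (X - C u) * (X - C v) * (X - C w) * (X - C z) =
    X^4 - C (u+v+w+z) * X^3 + C (u*v+u*w+u*z+v*w+v*z+w*z) * X^2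
      - C (u*v*w+u*v*z+u*w*z+v*w*z) * X + C (u*v*w*z) := by
  simp only [C_add, C_mul]; ring

private lemma coeff3_expand (e3 e2 e1 e0 : ℂ) :
    (X^4 - C e3*X^3 + C e2*X^2 - C e1*X + C e0).coeff 3 = -e3 := by
  simp [coeff_X_pow, coeff_C]

private lemma coeff2_expand (e3 e2 e1 e0 : ℂ) :
    (X^4 - C e3*X^3 + C e2*X^2 - C e1*X + C e0).coeff 2 = e2 := by
  simp [coeff_X_pow, coeff_C]

/-- Let `ℓ > 0`, `θ ∈ (0,π)` be such that `e^ℓ` is a Salem number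
of degree 4 with conjugates `e^{-ℓ}, e^{±iθ}` (encoded by saying that the
minimal polynomial of `e^ℓ` over `ℚ` has precisely the roots
`e^ℓ, e^{-ℓ}, e^{iθ}, e^{-iθ}` in `ℂ`). Then the minimal polynomial over `ℚ` of
`β = e^{ℓ+iθ}` is
`x⁴ - (4cosh ℓ cos θ)x³ + (2 + 4cosh²ℓ - 4sin²θ)x² - (4cosh ℓ cos θ)x + 1`;
in particular `β` has degree `4` over `ℚ`. -/
theorem stmt_5 (ℓ θ : ℝ) (hℓ : 0 < ℓ) (hθ : θ ∈ Set.Ioo 0 Real.pi)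
    (hSalem : (minpoly ℚ (Real.exp ℓ)).map (algebraMap ℚ ℂ) =
      (X - C ((Real.exp ℓ : ℝ) : ℂ)) * (X - C ((Real.exp (-ℓ) : ℝ) : ℂ)) *
        (X - C (Complex.exp (θ * Complex.I))) *
        (X - C (Complex.exp (-(θ * Complex.I)))))
    (β : ℂ) (hβ : β = Complex.exp ((ℓ : ℂ) + θ * Complex.I)) :
    (minpoly ℚ β).map (algebraMap ℚ ℂ) =
      X ^ 4 - C ((4 * Real.cosh ℓ * Real.cos θ : ℝ) : ℂ) * X ^ 3 +
        C ((2 + 4 * Real.cosh ℓ ^ 2 - 4 * Real.sin θ ^ 2 : ℝ) : ℂ) * X ^ 2 -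
        C ((4 * Real.cosh ℓ * Real.cos θ : ℝ) : ℂ) * X + 1 ∧
    (minpoly ℚ β).natDegree = 4 := by
  set cx := Complex.exp (ℓ:ℂ) with hcx
  set cy := Complex.exp ((θ:ℂ) * Complex.I) with hcy
  have hcxne : cx ≠ 0 := Complex.exp_ne_zero _
  have hcyne : cy ≠ 0 := Complex.exp_ne_zero _
  have hx : cx + cx⁻¹ = 2 * Complex.cosh ℓ := by rw [← Complex.exp_neg, Complex.two_cosh]
  have hy : cy + cy⁻¹ = 2 * Complex.cos θ := by rw [← Complex.exp_neg, Complex.two_cos, neg_mul]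
  have h1c : cx * cx⁻¹ = 1 := mul_inv_cancel₀ hcxne
  have h2c : cy * cy⁻¹ = 1 := mul_inv_cancel₀ hcyne
  have hAc : ((4 * Real.cosh ℓ * Real.cos θ : ℝ) : ℂ) = (cx + cx⁻¹) * (cy + cy⁻¹) := by
    rw [hx, hy]; push_cast; ring
  have hBc : ((2 + 4 * Real.cosh ℓ ^ 2 - 4 * Real.sin θ ^ 2 : ℝ) : ℂ)
      = (cx + cx⁻¹)^2 + (cy + cy⁻¹)^2 - 2 := by
    rw [hx, hy, Real.sin_sq]; push_cast; ring
  set γ : ℂ := Complex.exp ((ℓ : ℂ) - θ * Complex.I) with hγ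
  have hβ2 : β = cx * cy := by rw [hβ, Complex.exp_add]
  have hγ2 : γ = cx * cy⁻¹ := by rw [hγ, sub_eq_add_neg, Complex.exp_add, Complex.exp_neg]
  have hβi : β⁻¹ = cx⁻¹ * cy⁻¹ := by rw [hβ2, mul_inv]
  have hγi : γ⁻¹ = cx⁻¹ * cy := by rw [hγ2, mul_inv, inv_inv]
  have E3 : β + β⁻¹ + γ + γ⁻¹ = ((4 * Real.cosh ℓ * Real.cos θ : ℝ) : ℂ) := by
    rw [hβi, hγi, hβ2, hγ2, hAc]; ring
  have E2 : β*β⁻¹ + β*γ + β*γ⁻¹ + β⁻¹*γ + β⁻¹*γ⁻¹ + γ*γ⁻¹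
      = ((2 + 4 * Real.cosh ℓ ^ 2 - 4 * Real.sin θ ^ 2 : ℝ) : ℂ) := by
    rw [hβi, hγi, hβ2, hγ2, hBc]
    linear_combination (cx^2 + cx⁻¹^2 + 2*(cx*cx⁻¹ - 1)) * h2c + (cy^2 + cy⁻¹^2) * h1c
  have E1 : β*β⁻¹*γ + β*β⁻¹*γ⁻¹ + β*γ*γ⁻¹ + β⁻¹*γ*γ⁻¹
      = ((4 * Real.cosh ℓ * Real.cos θ : ℝ) : ℂ) := by
    rw [hβi, hγi, hβ2, hγ2, hAc]
    linear_combination ((cx*cy + cx*cy⁻¹ + cx⁻¹*cy + cx⁻¹*cy⁻¹) * cx * cx⁻¹) * h2c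
      + (cx*cy + cx*cy⁻¹ + cx⁻¹*cy + cx⁻¹*cy⁻¹) * h1c
  have E0 : β*β⁻¹*γ*γ⁻¹ = 1 := by
    rw [hβi, hγi, hβ2, hγ2]
    linear_combination ((cx*cx⁻¹*cy*cy⁻¹ + 1) * cx * cx⁻¹) * h2c + (cx*cx⁻¹*cy*cy⁻¹ + 1) * h1c
  -- rationality of the coefficients, from hSalem
  set p := minpoly ℚ (Real.exp ℓ) with hp
  have hu : ((Real.exp ℓ : ℝ) : ℂ) = cx := by rw [hcx, Complex.ofReal_exp]
  have hv : ((Real.exp (-ℓ) : ℝ) : ℂ) = cx⁻¹ := by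
    rw [hcx, ← Complex.exp_neg, Complex.ofReal_exp, Complex.ofReal_neg]
  have hw' : Complex.exp (-((θ:ℝ) * Complex.I)) = cy⁻¹ := by rw [hcy, ← Complex.exp_neg]
  rw [hu, hv, hw', expand4] at hSalem
  have h3 : algebraMap ℚ ℂ (p.coeff 3) = -(cx + cx⁻¹ + cy + cy⁻¹) := by
    rw [← Polynomial.coeff_map, hSalem, coeff3_expand]
  have h2 : algebraMap ℚ ℂ (p.coeff 2)
      = cx*cx⁻¹ + cx*cy + cx*cy⁻¹ + cx⁻¹*cy + cx⁻¹*cy⁻¹ + cy*cy⁻¹ := by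
    rw [← Polynomial.coeff_map, hSalem, coeff2_expand]
  have h3r : ((p.coeff 3 : ℚ) : ℝ) = -(2*Real.cosh ℓ + 2*Real.cos θ) := by
    have : ((p.coeff 3 : ℚ) : ℂ) = ((-(2*Real.cosh ℓ + 2*Real.cos θ) : ℝ) : ℂ) := by
      rw [← eq_ratCast (algebraMap ℚ ℂ), h3]
      push_cast
      rw [← hx, ← hy]; ring
    exact_mod_cast this
  have h2r : ((p.coeff 2 : ℚ) : ℝ) = 2 + 4*Real.cosh ℓ*Real.cos θ := by
    have : ((p.coeff 2 : ℚ) : ℂ) = ((2 + 4*Real.cosh ℓ*Real.cos θ : ℝ) : ℂ) := by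
      rw [← eq_ratCast (algebraMap ℚ ℂ), h2]
      push_cast
      linear_combination h1c + h2c + (cy + cy⁻¹) * hx + (2*Complex.cosh (ℓ:ℂ)) * hy
    exact_mod_cast this
  set aq : ℚ := p.coeff 2 - 2 with haqdef
  set bq : ℚ := (p.coeff 3)^2 - 2*(p.coeff 2) + 2 with hbqdef
  have haq : ((aq : ℚ) : ℝ) = 4 * Real.cosh ℓ * Real.cos θ := by
    push_cast [haqdef]; rw [h2r]; ring
  have hbq : ((bq : ℚ) : ℝ) = 2 + 4 * Real.cosh ℓ ^ 2 - 4 * Real.sin θ ^ 2 := by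
    push_cast [hbqdef]; rw [h3r, h2r]
    linear_combination 4 * Real.sin_sq_add_cos_sq θ
  have hp4 : p.natDegree = 4 := by
    rw [← Polynomial.natDegree_map_eq_of_injective (algebraMap ℚ ℂ).injective p, hSalem]
    compute_degree!
  -- the candidate polynomial
  set q : ℚ[X] := X^4 - C aq*X^3 + C bq*X^2 - C aq*X + 1 with hqdef
  have hqm : q.Monic := by unfold q; monicity!
  have hqd : q.natDegree = 4 := by unfold q; compute_degree!
  have hacast : (algebraMap ℚ ℂ) aq = ((4 * Real.cosh ℓ * Real.cos θ : ℝ) : ℂ) := by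
    rw [eq_ratCast, ← Complex.ofReal_ratCast, haq]
  have hbcast : (algebraMap ℚ ℂ) bq = ((2 + 4 * Real.cosh ℓ ^ 2 - 4 * Real.sin θ ^ 2 : ℝ) : ℂ) := by
    rw [eq_ratCast, ← Complex.ofReal_ratCast, hbq]
  have hqmap : q.map (algebraMap ℚ ℂ) =
      X ^ 4 - C ((4 * Real.cosh ℓ * Real.cos θ : ℝ) : ℂ) * X ^ 3 +
        C ((2 + 4 * Real.cosh ℓ ^ 2 - 4 * Real.sin θ ^ 2 : ℝ) : ℂ) * X ^ 2 -
        C ((4 * Real.cosh ℓ * Real.cos θ : ℝ) : ℂ) * X + 1 := by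
    unfold q
    simp only [Polynomial.map_add, Polynomial.map_sub, Polynomial.map_mul, Polynomial.map_pow,
      Polynomial.map_one, Polynomial.map_X, Polynomial.map_C, hacast, hbcast]
  have hfact : (X ^ 4 - C ((4 * Real.cosh ℓ * Real.cos θ : ℝ) : ℂ) * X ^ 3 +
        C ((2 + 4 * Real.cosh ℓ ^ 2 - 4 * Real.sin θ ^ 2 : ℝ) : ℂ) * X ^ 2 -
        C ((4 * Real.cosh ℓ * Real.cos θ : ℝ) : ℂ) * X + 1 : ℂ[X]) =
      (X - C β) * (X - C β⁻¹) * (X - C γ) * (X - C γ⁻¹) := by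
    rw [expand4, E3, E2, E1, E0, map_one]
  have hq0 : Polynomial.aeval β q = 0 := by
    rw [Polynomial.aeval_def, ← Polynomial.eval_map, hqmap, hfact]
    simp
  have hint : IsIntegral ℚ β := ⟨q, hqm, by rwa [Polynomial.aeval_def] at hq0⟩
  set m := minpoly ℚ β with hm
  have hmm0 : m.Monic := minpoly.monic hint
  obtain ⟨c, hc⟩ : m ∣ q := minpoly.dvd ℚ β hq0
  have hqne : q ≠ 0 := hqm.ne_zero
  have hcne : c ≠ 0 := by rintro rfl; rw [mul_zero] at hc; exact hqne hc
  have hmne : m ≠ 0 := hmm0.ne_zero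
  have hdsum : m.natDegree + c.natDegree = 4 := by
    rw [← Polynomial.natDegree_mul hmne hcne, ← hc, hqd]
  have hcm : c.Monic := by
    have h := congrArg Polynomial.leadingCoeff hc
    rw [Polynomial.leadingCoeff_mul, hmm0.leadingCoeff, one_mul, hqm.leadingCoeff] at h
    exact h.symm
  have hd1 : 1 ≤ m.natDegree := minpoly.natDegree_pos hint
  -- imaginary parts
  have hsin : 0 < Real.sin θ := Real.sin_pos_of_pos_of_lt_pi hθ.1 hθ.2
  have himβ : β.im = Real.exp ℓ * Real.sin θ := by
    rw [hβ, Complex.exp_im]; simp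
  have himβi : (β⁻¹).im = -(Real.exp (-ℓ) * Real.sin θ) := by
    rw [hβ, ← Complex.exp_neg, Complex.exp_im]; simp
  have himγ : γ.im = -(Real.exp ℓ * Real.sin θ) := by
    rw [hγ, Complex.exp_im]; simp
  have himγi : (γ⁻¹).im = Real.exp (-ℓ) * Real.sin θ := by
    rw [hγ, ← Complex.exp_neg, Complex.exp_im]; simp
  have nβ : β.im ≠ 0 := by rw [himβ]; positivity
  have nβi : (β⁻¹).im ≠ 0 := by rw [himβi]; simp; positivity
  have nγ : γ.im ≠ 0 := by rw [himγ]; simp; positivity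
  have nγi : (γ⁻¹).im ≠ 0 := by rw [himγi]; positivity
  -- case analysis on the degree of m
  have hcases : m.natDegree = 1 ∨ m.natDegree = 2 ∨ m.natDegree = 3 ∨ m.natDegree = 4 := by omega
  rcases hcases with hmd | hmd | hmd | hmd
  · -- degree 1 : β would be rational, but it is not real
    exfalso
    have hm1 : m = X + C (m.coeff 0) := by
      conv_lhs => rw [Polynomial.eq_X_add_C_of_natDegree_le_one (le_of_eq hmd)]
      rw [show m.coeff 1 = 1 from by rw [← hmd]; exact hmm0.coeff_natDegree, C_1, one_mul]
    have h0 := minpoly.aeval ℚ β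
    rw [← hm] at h0
    rw [hm1, map_add, Polynomial.aeval_X, Polynomial.aeval_C] at h0
    have h0' := congrArg Complex.im h0
    rw [Complex.add_im, eq_ratCast, Complex.ratCast_im, Complex.zero_im, add_zero] at h0'
    exact nβ h0'
  · -- degree 2 : then β * conj β = e^{2ℓ} would be rational
    exfalso
    set mm := m.map (algebraMap ℚ ℂ) with hmmdef
    have hmmβ : mm.eval β = 0 := by
      rw [hmmdef, Polynomial.eval_map, ← Polynomial.aeval_def]; exact minpoly.aeval ℚ β
    have hkey : mm.eval ((starRingEnd ℂ) β) = (starRingEnd ℂ) (mm.eval β) := by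
      rw [hmmdef, Polynomial.eval_map, Polynomial.eval_map, Polynomial.hom_eval₂]
      congr 1
      exact Subsingleton.elim _ _
    have hcb : (starRingEnd ℂ) β = γ := by
      rw [hβ, hγ, ← Complex.exp_conj]
      congr 1
      apply Complex.ext <;> simp
    have hγroot : mm.eval γ = 0 := by rw [← hcb, hkey, hmmβ, map_zero]
    obtain ⟨g, hg⟩ : (X - C β) ∣ mm := Polynomial.dvd_iff_isRoot.mpr hmmβ
    have hmmne : mm ≠ 0 := (hmm0.map _).ne_zero
    have hgne : g ≠ 0 := by rintro rfl; rw [mul_zero] at hg; exact hmmne hg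
    have hmmdeg : mm.natDegree = 2 := by rw [hmmdef, hmm0.natDegree_map]; exact hmd
    have hgdeg : g.natDegree = 1 := by
      have h := Polynomial.natDegree_mul (Polynomial.X_sub_C_ne_zero β) hgne
      rw [← hg, hmmdeg, Polynomial.natDegree_X_sub_C] at h; omega
    have hgm : g.Monic := by
      have h := congrArg Polynomial.leadingCoeff hg
      rw [Polynomial.leadingCoeff_mul, (Polynomial.monic_X_sub_C β).leadingCoeff, one_mul,
        (hmm0.map _).leadingCoeff] at h
      exact h.symm
    have hgeq : g = X + C (g.coeff 0) := by
      conv_lhs => rw [Polynomial.eq_X_add_C_of_natDegree_le_one (le_of_eq hgdeg)]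
      rw [show g.coeff 1 = 1 from by rw [← hgdeg]; exact hgm.coeff_natDegree, C_1, one_mul]
    have hprod : (γ - β) * (γ + g.coeff 0) = 0 := by
      have h := hγroot
      rw [hg, Polynomial.eval_mul, Polynomial.eval_sub, Polynomial.eval_X, Polynomial.eval_C,
        hgeq, Polynomial.eval_add, Polynomial.eval_X, Polynomial.eval_C] at h
      exact h
    have hneγβ : γ - β ≠ 0 := by
      refine sub_ne_zero.mpr ?_
      intro h
      have h' := congrArg Complex.im h
      rw [himγ, himβ] at h'
      nlinarith [Real.exp_pos ℓ, hsin]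
    have hg0 : g.coeff 0 = -γ := by
      have h' := (mul_eq_zero.mp hprod).resolve_left hneγβ
      linear_combination h'
    have hcoeff0 : (algebraMap ℚ ℂ) (m.coeff 0) = β * γ := by
      rw [← Polynomial.coeff_map, ← hmmdef, hg, Polynomial.mul_coeff_zero, hgeq]
      simp [Polynomial.coeff_sub, Polynomial.coeff_add, Polynomial.coeff_X_zero,
        Polynomial.coeff_C_zero, hg0]
    have hβγ : β * γ = ((Real.exp ℓ * Real.exp ℓ : ℝ) : ℂ) := by
      rw [hβ2, hγ2]
      push_cast
      rw [← hcx]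
      linear_combination (cx*cx) * h2c
    have hr : ((m.coeff 0 : ℚ) : ℝ) = Real.exp ℓ * Real.exp ℓ := by
      have h : ((m.coeff 0 : ℚ):ℂ) = ((Real.exp ℓ * Real.exp ℓ : ℝ):ℂ) := by
        rw [← eq_ratCast (algebraMap ℚ ℂ), hcoeff0, hβγ]
      exact_mod_cast h
    have hPa : (Polynomial.aeval (Real.exp ℓ)) (X^2 - C (m.coeff 0) : ℚ[X]) = 0 := by
      rw [map_sub, map_pow, Polynomial.aeval_X, Polynomial.aeval_C, eq_ratCast, hr]
      ring
    have hPne : (X^2 - C (m.coeff 0) : ℚ[X]) ≠ 0 := fun h => by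
      simpa [Polynomial.coeff_X_pow, Polynomial.coeff_C] using
        congrArg (fun pp => Polynomial.coeff pp 2) h
    have hle := Polynomial.natDegree_le_of_dvd (minpoly.dvd ℚ (Real.exp ℓ) hPa) hPne
    have hle2 : (X^2 - C (m.coeff 0) : ℚ[X]).natDegree ≤ 2 := by compute_degree
    rw [← hp] at hle
    omega
  · -- degree 3 : the cofactor would have a rational root, but r has no real roots
    exfalso
    have hcd : c.natDegree = 1 := by omega
    set ρ := c.coeff 0 with hρ
    have hc1 : c = X + C ρ := by
      conv_lhs => rw [Polynomial.eq_X_add_C_of_natDegree_le_one (le_of_eq hcd)]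
      rw [show c.coeff 1 = 1 from by rw [← hcd]; exact hcm.coeff_natDegree, C_1, one_mul]
    have hz : Polynomial.eval ((algebraMap ℚ ℂ) (-ρ)) (q.map (algebraMap ℚ ℂ)) = 0 := by
      rw [hc, Polynomial.map_mul, Polynomial.eval_mul, hc1, Polynomial.map_add, Polynomial.map_X,
        Polynomial.map_C, Polynomial.eval_add, Polynomial.eval_X, Polynomial.eval_C, map_neg]
      ring
    rw [hqmap, hfact] at hz
    have hzim : ((algebraMap ℚ ℂ) (-ρ)).im = 0 := by
      rw [eq_ratCast]; exact Complex.ratCast_im _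
    simp only [Polynomial.eval_mul, Polynomial.eval_sub, Polynomial.eval_X, Polynomial.eval_C,
      mul_eq_zero, sub_eq_zero] at hz
    rcases hz with ((h | h) | h) | h
    · rw [h] at hzim; exact nβ hzim
    · rw [h] at hzim; exact nβi hzim
    · rw [h] at hzim; exact nγ hzim
    · rw [h] at hzim; exact nγi hzim
  · -- degree 4 : m = q
    have hc1 : c = 1 := hcm.natDegree_eq_zero.mp (by omega)
    have hmq : m = q := by rw [hc, hc1, mul_one]
    refine ⟨?_, hmd⟩
    rw [hmq]
    exact hqmap
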